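/- Let D : [0,∞) → ℝ be a bounded continuous function whose transition operator Φ(t,s) = exp(∫_s^t D(τ) dτ) satisfies an unstable exponential dichotomy estimate: there exist L ≥ 1 and η > 0 with Φ(t,s) ≥ L⁻¹·exp(η·(t − s)) for all t ≥ s ≥ 0. Then for every bounded continuous function v : [0,∞) → ℝ, the inhomogeneous equation x'(t) = D(t)·x(t) + v(t) has exactly one bounded differentiable solution on [0,∞). -/

import Mathlib

open Filter Set

/-- Transition operator of the scalar linear equation `x' = D t * x`. -/
noncomputable def Phi (D : ℝ → ℝ) (t s : ℝ) : ℝ :=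
  Real.exp (∫ τ in s..t, D τ)

/-- Average of `D` over the interval from `q.1` to `q.2`. -/
noncomputable def bohlAvg (D : ℝ → ℝ) (q : ℝ × ℝ) : ℝ :=
  (q.2 - q.1)⁻¹ * ∫ τ in q.1..q.2, D τ

/-- The filter describing `t - s → +∞` with `t > s ≥ 0` for pairs `q = (s, t)`. -/
def bohlFilter : Filter (ℝ × ℝ) :=
  (Filter.atTop.comap fun q : ℝ × ℝ => q.2 - q.1) ⊓
    Filter.principal {q : ℝ × ℝ | 0 ≤ q.1 ∧ q.1 < q.2}

/-- Upper Bohl exponent of `D`. -/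
noncomputable def bohlUpper (D : ℝ → ℝ) : ℝ :=
  Filter.limsup (bohlAvg D) bohlFilter

/-- Lower Bohl exponent of `D`. -/
noncomputable def bohlLower (D : ℝ → ℝ) : ℝ :=
  Filter.liminf (bohlAvg D) bohlFilter

section helpers

lemma ftc_cont {f : ℝ → ℝ} (hf : Continuous f) (t : ℝ) :
    HasDerivAt (fun u => ∫ x in (0:ℝ)..u, f x) (f t) t :=
  intervalIntegral.integral_hasDerivAt_right (hf.intervalIntegrable 0 t)
    (hf.stronglyMeasurableAtFilter _ _) hf.continuousAt

lemma integral_exp_neg_mul_Ioi' {η : ℝ} (hη : 0 < η) (t : ℝ) :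
    ∫ s in Ioi t, Real.exp (-(η * s)) = Real.exp (-(η * t)) / η := by
  have hderiv : ∀ x ∈ Ici t, HasDerivAt (fun s => -Real.exp (-(η * s)) / η)
      (Real.exp (-(η * x))) x := by
    intro x _
    have h1 : HasDerivAt (fun s : ℝ => -(η * s)) (-η) x := by
      exact (((hasDerivAt_id x).const_mul η).neg).congr_deriv (by simp)
    have h2 := (h1.exp.neg.div_const η)
    refine h2.congr_deriv ?_
    rw [div_eq_iff hη.ne']; ring
  have hint : MeasureTheory.IntegrableOn (fun s => Real.exp (-(η * s))) (Ioi t) := by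
    simpa [neg_mul] using exp_neg_integrableOn_Ioi t hη
  have htend : Tendsto (fun s => -Real.exp (-(η * s)) / η) atTop (nhds 0) := by
    have h1 : Tendsto (fun s : ℝ => -(η * s)) atTop atBot :=
      tendsto_neg_atBot_iff.mpr (tendsto_id.const_mul_atTop hη)
    have := (Real.tendsto_exp_atBot.comp h1).neg.div_const η
    simpa using this
  have := MeasureTheory.integral_Ioi_of_hasDerivAt_of_tendsto' hderiv hint htend
  rw [this]; field_simp; ring

end helpers

/-- If the transition operator of `x' = D t * x` satisfies an unstable exponential
dichotomy estimate, then for every bounded continuous `v` the inhomogeneous equation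
`x' = D t * x + v t` has exactly one bounded solution on `[0,∞)`. -/
theorem unstable_dichotomy_unique_bounded_solution (D : ℝ → ℝ)
    (hD_cont : ContinuousOn D (Set.Ici 0)) (hD_bdd : ∃ M, ∀ t, 0 ≤ t → |D t| ≤ M)
    (L η : ℝ) (hL : 1 ≤ L) (hη : 0 < η)
    (hdich : ∀ s t, 0 ≤ s → s ≤ t → L⁻¹ * Real.exp (η * (t - s)) ≤ Phi D t s)
    (v : ℝ → ℝ) (hv_cont : ContinuousOn v (Set.Ici 0))
    (hv_bdd : ∃ M, ∀ t, 0 ≤ t → |v t| ≤ M) :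
    (∃ x : ℝ → ℝ,
      (∀ t, 0 ≤ t → HasDerivAt x (D t * x t + v t) t) ∧
        ∃ M, ∀ t, 0 ≤ t → |x t| ≤ M) ∧
    (∀ x y : ℝ → ℝ,
      ((∀ t, 0 ≤ t → HasDerivAt x (D t * x t + v t) t) ∧ ∃ M, ∀ t, 0 ≤ t → |x t| ≤ M) →
      ((∀ t, 0 ≤ t → HasDerivAt y (D t * y t + v t) t) ∧ ∃ M, ∀ t, 0 ≤ t → |y t| ≤ M) →
      ∀ t, 0 ≤ t → x t = y t) := by
  obtain ⟨Mv, hMv⟩ := hv_bdd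
  have hMv0 : 0 ≤ Mv := (abs_nonneg _).trans (hMv 0 le_rfl)
  have hL0 : 0 < L := lt_of_lt_of_le one_pos hL
  -- truncated coefficient functions, continuous on all of ℝ
  set m : ℝ → ℝ := fun τ => max τ 0 with hm
  have hm_cont : Continuous m := continuous_id.max continuous_const
  have hm_mem : ∀ τ, m τ ∈ Set.Ici (0:ℝ) := fun τ => Set.mem_Ici.mpr (le_max_right _ _)
  set Dt : ℝ → ℝ := fun τ => D (m τ) with hDt
  set vt : ℝ → ℝ := fun τ => v (m τ) with hvt
  have hDt_cont : Continuous Dt := hD_cont.comp_continuous hm_cont hm_mem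
  have hvt_cont : Continuous vt := hv_cont.comp_continuous hm_cont hm_mem
  have hDt_eq : ∀ τ : ℝ, 0 ≤ τ → Dt τ = D τ := fun τ hτ => by
    simp only [hDt, hm, max_eq_left hτ]
  have hvt_eq : ∀ τ : ℝ, 0 ≤ τ → vt τ = v τ := fun τ hτ => by
    simp only [hvt, hm, max_eq_left hτ]
  -- fundamental solution
  set P : ℝ → ℝ := fun t => Real.exp (∫ τ in (0:ℝ)..t, Dt τ) with hP
  have hP_pos : ∀ t, 0 < P t := fun t => Real.exp_pos _
  have hP_deriv : ∀ t, HasDerivAt P (Dt t * P t) t := by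
    intro t
    have := (ftc_cont hDt_cont t).exp
    simpa [hP, mul_comm] using this
  have hP_cont : Continuous P := by
    rw [continuous_iff_continuousAt]
    exact fun t => (hP_deriv t).continuousAt
  have hP0 : P 0 = 1 := by
    show Real.exp (∫ τ in (0:ℝ)..0, Dt τ) = 1
    rw [intervalIntegral.integral_same, Real.exp_zero]
  -- relation with Phi
  have hPhi : ∀ s t : ℝ, 0 ≤ s → s ≤ t → Phi D t s = P t / P s := by
    intro s t hs hst
    have hadd : (∫ τ in (0:ℝ)..s, Dt τ) + ∫ τ in s..t, Dt τ = ∫ τ in (0:ℝ)..t, Dt τ :=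
      intervalIntegral.integral_add_adjacent_intervals
        (hDt_cont.intervalIntegrable 0 s) (hDt_cont.intervalIntegrable s t)
    have hcongr : (∫ τ in s..t, Dt τ) = ∫ τ in s..t, D τ := by
      apply intervalIntegral.integral_congr
      intro τ hτ
      rw [Set.uIcc_of_le hst] at hτ
      exact hDt_eq τ (hs.trans hτ.1)
    rw [Phi, ← hcongr, hP]
    simp only
    rw [← Real.exp_sub]
    congr 1
    linarith [hadd]
  -- decay estimate on P t / P s for t ≤ s
  have hkey : ∀ t s : ℝ, 0 ≤ t → t ≤ s → P t / P s ≤ L * Real.exp (-(η * (s - t))) := by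
    intro t s ht hts
    have h1 := hdich t s ht hts
    rw [hPhi t s ht hts] at h1
    have h2 : 0 < L⁻¹ * Real.exp (η * (s - t)) := by positivity
    have h4 : P t / P s = (P s / P t)⁻¹ := by rw [inv_div]
    rw [h4]
    calc (P s / P t)⁻¹ ≤ (L⁻¹ * Real.exp (η * (s - t)))⁻¹ :=
          inv_anti₀ h2 h1
      _ = L * Real.exp (-(η * (s - t))) := by
          rw [mul_inv, inv_inv, Real.exp_neg]
  -- the kernel g
  set g : ℝ → ℝ := fun s => vt s * (P s)⁻¹ with hg
  have hg_cont : Continuous g := hvt_cont.mul (hP_cont.inv₀ (fun s => (hP_pos s).ne'))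
  have hg_bd : ∀ t s : ℝ, 0 ≤ t → t ≤ s → P t * |g s| ≤ Mv * L * Real.exp (-(η * (s - t))) := by
    intro t s ht hts
    have hs0 : 0 ≤ s := ht.trans hts
    have heq : P t * |g s| = |vt s| * (P t / P s) := by
      rw [hg]; simp only
      rw [abs_mul, abs_inv, abs_of_pos (hP_pos s)]
      ring
    rw [heq]
    have h1 : |vt s| ≤ Mv := by rw [hvt_eq s hs0]; exact hMv s hs0
    have h2 := hkey t s ht hts
    calc |vt s| * (P t / P s) ≤ Mv * (L * Real.exp (-(η * (s - t)))) :=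
          mul_le_mul h1 h2 (div_nonneg (hP_pos t).le (hP_pos s).le) hMv0
      _ = Mv * L * Real.exp (-(η * (s - t))) := by ring
  have hexp_int : ∀ t : ℝ, MeasureTheory.IntegrableOn
      (fun s => Real.exp (-(η * s))) (Set.Ioi t) := fun t => by
    simpa [neg_mul] using exp_neg_integrableOn_Ioi t hη
  have hg_int0 : MeasureTheory.IntegrableOn g (Set.Ioi 0) := by
    apply MeasureTheory.Integrable.mono ((hexp_int 0).const_mul (Mv * L))
      hg_cont.aestronglyMeasurable.restrict
    filter_upwards [MeasureTheory.ae_restrict_mem measurableSet_Ioi] with s hs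
    have h := hg_bd 0 s le_rfl hs.le
    rw [hP0, one_mul] at h
    rw [Real.norm_eq_abs, Real.norm_eq_abs]
    refine h.trans ?_
    rw [abs_of_nonneg (by positivity)]
    simp
  have hg_int : ∀ t : ℝ, 0 ≤ t → MeasureTheory.IntegrableOn g (Set.Ioi t) := fun t ht =>
    hg_int0.mono_set (Set.Ioi_subset_Ioi ht)
  -- the candidate bounded solution
  set c : ℝ := -∫ s in Set.Ioi (0:ℝ), g s with hc
  set F : ℝ → ℝ := fun t => c + ∫ s in (0:ℝ)..t, g s with hF
  set x : ℝ → ℝ := fun t => P t * F t with hx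
  have hF_deriv : ∀ t, HasDerivAt F (g t) t := fun t => (ftc_cont hg_cont t).const_add c
  have hx_deriv : ∀ t, HasDerivAt x (Dt t * x t + vt t) t := by
    intro t
    have h := (hP_deriv t).mul (hF_deriv t)
    refine h.congr_deriv ?_
    rw [hx, hg]; simp only
    have hPne : P t ≠ 0 := (hP_pos t).ne'
    field_simp
  have hF_eq : ∀ t : ℝ, 0 ≤ t → F t = -∫ s in Set.Ioi t, g s := by
    intro t ht
    have hsplit : ∫ s in Set.Ioi (0:ℝ), g s
        = (∫ s in Set.Ioc 0 t, g s) + ∫ s in Set.Ioi t, g s := by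
      rw [← MeasureTheory.setIntegral_union (Set.Ioc_disjoint_Ioi le_rfl) measurableSet_Ioi
        (hg_int0.mono_set Set.Ioc_subset_Ioi_self) (hg_int t ht), Set.Ioc_union_Ioi_eq_Ioi ht]
    rw [hF]; simp only
    rw [intervalIntegral.integral_of_le ht, hc]
    linarith [hsplit]
  have hx_bd : ∀ t, 0 ≤ t → |x t| ≤ Mv * L / η := by
    intro t ht
    rw [hx]; simp only
    rw [hF_eq t ht, mul_neg, abs_neg, ← MeasureTheory.integral_const_mul]
    have h1 : |∫ s in Set.Ioi t, P t * g s| ≤ ∫ s in Set.Ioi t, |P t * g s| := by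
      simpa only [Real.norm_eq_abs] using
        MeasureTheory.norm_integral_le_integral_norm (μ := MeasureTheory.volume.restrict (Set.Ioi t))
          (fun s => P t * g s)
    refine h1.trans ?_
    have h2 : ∫ s in Set.Ioi t, |P t * g s|
        ≤ ∫ s in Set.Ioi t, Mv * L * Real.exp (η * t) * Real.exp (-(η * s)) := by
      apply MeasureTheory.setIntegral_mono_on
      · exact ((hg_int t ht).const_mul (P t)).abs
      · exact (hexp_int t).const_mul _
      · exact measurableSet_Ioi
      · intro s hs
        rw [abs_mul, abs_of_pos (hP_pos t)]
        refine (hg_bd t s ht hs.le).trans ?_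
        have he : Real.exp (-(η * (s - t))) = Real.exp (η * t) * Real.exp (-(η * s)) := by
          rw [← Real.exp_add]; ring_nf
        apply le_of_eq
        rw [he]; ring
    refine h2.trans ?_
    rw [MeasureTheory.integral_const_mul, integral_exp_neg_mul_Ioi' hη t]
    rw [Real.exp_neg]
    have hexpne : Real.exp (η * t) ≠ 0 := Real.exp_ne_zero _
    apply le_of_eq
    field_simp
  constructor
  · refine ⟨x, ?_, ⟨Mv * L / η, hx_bd⟩⟩
    intro t ht
    have h := hx_deriv t
    rwa [hDt_eq t ht, hvt_eq t ht] at h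
  · rintro x1 y ⟨hx1d, Mx, hx1b⟩ ⟨hyd, My, hyb⟩ t ht
    have hMx0 : 0 ≤ Mx := (abs_nonneg _).trans (hx1b 0 le_rfl)
    have hMy0 : 0 ≤ My := (abs_nonneg _).trans (hyb 0 le_rfl)
    set z : ℝ → ℝ := fun τ => (x1 τ - y τ) * (P τ)⁻¹ with hz
    have hz_deriv : ∀ τ, 0 ≤ τ → HasDerivAt z 0 τ := by
      intro τ hτ
      have hPinv : HasDerivAt (fun u => (P u)⁻¹) (-(Dt τ * P τ) / (P τ)^2) τ :=
        (hP_deriv τ).inv (hP_pos τ).ne'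
      have hd : HasDerivAt (fun u => x1 u - y u) (D τ * (x1 τ - y τ)) τ := by
        have h := (hx1d τ hτ).sub (hyd τ hτ)
        refine h.congr_deriv ?_; ring
      have h := hd.mul hPinv
      refine h.congr_deriv ?_
      rw [hDt_eq τ hτ]
      have hPne : P τ ≠ 0 := (hP_pos τ).ne'
      field_simp
      ring
    have hz_const : ∀ τ, 0 ≤ τ → z τ = z 0 := by
      intro τ hτ
      rcases eq_or_lt_of_le hτ with h|h
      · rw [← h]
      · have h := constant_of_has_deriv_right_zero (f := z) (a := 0) (b := τ)
          (fun s hs => ((hz_deriv s hs.1).continuousAt).continuousWithinAt)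
          (fun s hs => (hz_deriv s hs.1).hasDerivWithinAt)
        exact h τ (Set.right_mem_Icc.mpr hτ)
    have hdiff : ∀ τ, 0 ≤ τ → x1 τ - y τ = (x1 0 - y 0) * P τ := by
      intro τ hτ
      have h := hz_const τ hτ
      rw [hz] at h; simp only at h
      rw [hP0] at h
      have hPne : P τ ≠ 0 := (hP_pos τ).ne'
      field_simp at h
      linarith [h]
    have h0 : x1 0 = y 0 := by
      by_contra hne
      set d : ℝ := |x1 0 - y 0| with hd
      have hd0 : 0 < d := abs_pos.mpr (sub_ne_zero.mpr hne)
      set K : ℝ := Mx + My with hK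
      have hdK : d ≤ K := by
        calc d = |x1 0 - y 0| := hd
          _ ≤ |x1 0| + |y 0| := abs_sub _ _
          _ ≤ Mx + My := add_le_add (hx1b 0 le_rfl) (hyb 0 le_rfl)
      have hKpos : 0 < K := lt_of_lt_of_le hd0 hdK
      have hK0 : 0 < K * L / d := by positivity
      set T : ℝ := max 0 (η⁻¹ * Real.log (K * L / d) + η⁻¹) with hT
      have hT0 : 0 ≤ T := le_max_left _ _
      have hb := hdich 0 T le_rfl hT0
      rw [hPhi 0 T le_rfl hT0, hP0, div_one, sub_zero] at hb
      have h1 : |x1 T - y T| ≤ K := by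
        calc |x1 T - y T| ≤ |x1 T| + |y T| := abs_sub _ _
          _ ≤ Mx + My := add_le_add (hx1b T hT0) (hyb T hT0)
      have h2 : |x1 T - y T| = d * P T := by
        rw [hdiff T hT0, abs_mul, abs_of_pos (hP_pos T), hd]
      have h3 : K * L / d < Real.exp (η * T) := by
        have hTge : η⁻¹ * Real.log (K * L / d) + η⁻¹ ≤ T := le_max_right _ _
        have hlog : Real.log (K * L / d) < η * T := by
          have h7 := mul_le_mul_of_nonneg_left hTge hη.le
          have hηinv : η * η⁻¹ = 1 := mul_inv_cancel₀ hη.ne'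
          rw [mul_add, ← mul_assoc, hηinv, one_mul] at h7
          linarith
        calc K * L / d = Real.exp (Real.log (K * L / d)) := (Real.exp_log hK0).symm
          _ < Real.exp (η * T) := Real.exp_lt_exp.mpr hlog
      have h4 : K < d * P T := by
        have h5 : L⁻¹ * Real.exp (η * T) ≤ P T := hb
        have h6 : K = d * (L⁻¹ * (K * L / d)) := by field_simp
        calc K = d * (L⁻¹ * (K * L / d)) := h6
          _ < d * (L⁻¹ * Real.exp (η * T)) := by
              apply mul_lt_mul_of_pos_left _ hd0
              apply mul_lt_mul_of_pos_left h3 (by positivity)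
          _ ≤ d * P T := mul_le_mul_of_nonneg_left h5 hd0.le
      rw [← h2] at h4
      linarith
    have h := hdiff t ht
    rw [h0, sub_self, zero_mul] at h
    linarith
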